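/- Let f_ε, f_ε¹, f_ε² be families of maps on a normed space with f_ε = f_ε² ∘ f_ε¹, and define g(ε,x) = (f_ε(x) − f₀(x))/ε, g₁(ε,x) = (f_ε¹(x) − f₀¹(x))/ε, g₂(ε,x) = (f_ε²(x) − f₀²(x))/ε (with g(0,x), g₁(0,x), g₂(0,x) the limits as ε → 0, assumed to exist, with the families C¹ in ε). Suppose a functional π_I satisfies ‖π_I(g₁(0,x₁) − g₁(0,x₀))‖ ≤ L_g¹‖x₁ − x₀‖, ‖π_I(g₂(0,x₁) − g₂(0,x₀))‖ ≤ L_g²‖x₁ − x₀‖ for all x₀, x₁, and that f₀¹ is Lipschitz with constant L_f¹. Then ‖π_I(g(0,x₁) − g(0,x₀))‖ ≤ (L_g²·L_f¹ + L_g¹)·‖x₁ − x₀‖ for all x₀, x₁. -/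

import Mathlib

open Filter Topology

/-- **Lipschitz bound for the perturbation term of a composition.** If `f_ε = f_ε² ∘ f_ε¹`,
the first-order perturbation terms `g, g₁, g₂` exist as limits, `π_I ∘ g₁(ε,·)` and
`π_I ∘ g₂(ε,·)` are Lipschitz with constants `L₁, L₂` up to `o(1)` errors, `f₀¹` is Lipschitz
with constant `Lf`, and `π_I` (the energy coordinate) is preserved by the unperturbed map
`f₀²`, then `π_I ∘ g(0,·)` is Lipschitz with constant `L₂·Lf + L₁`. -/
theorem lipschitz_perturbation_composition
    {E : Type*} [NormedAddCommGroup E] [NormedSpace ℝ E]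
    (f f1 f2 : ℝ → E → E) (g g1 g2 : ℝ → E → E)
    (πI : E →L[ℝ] ℝ) (L1 L2 Lf : ℝ)
    (hcomp : ∀ ε x, f ε x = f2 ε (f1 ε x))
    (hg : ∀ ε : ℝ, ε ≠ 0 → ∀ x, g ε x = ε⁻¹ • (f ε x - f 0 x))
    (hg1 : ∀ ε : ℝ, ε ≠ 0 → ∀ x, g1 ε x = ε⁻¹ • (f1 ε x - f1 0 x))
    (hg2 : ∀ ε : ℝ, ε ≠ 0 → ∀ x, g2 ε x = ε⁻¹ • (f2 ε x - f2 0 x))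
    -- the perturbation terms extend continuously to `ε = 0`
    (hglim : ∀ x, Tendsto (fun ε => g ε x) (𝓝[≠] (0:ℝ)) (𝓝 (g 0 x)))
    (hg1lim : ∀ x, Tendsto (fun ε => g1 ε x) (𝓝[≠] (0:ℝ)) (𝓝 (g1 0 x)))
    (hg2lim : ∀ x, Tendsto (fun ε => g2 ε x) (𝓝[≠] (0:ℝ)) (𝓝 (g2 0 x)))
    -- Lipschitz estimates for `g₁(ε,·)`, `g₂(ε,·)` up to `o(1)` errors as `ε → 0`
    (e1 e2 : ℝ → ℝ)
    (he1 : Tendsto e1 (𝓝[≠] (0:ℝ)) (𝓝 0)) (he2 : Tendsto e2 (𝓝[≠] (0:ℝ)) (𝓝 0))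
    (hg1Lip : ∀ ε : ℝ, ∀ x₀ x₁, ‖πI (g1 ε x₁ - g1 ε x₀)‖ ≤ L1 * ‖x₁ - x₀‖ + e1 ε)
    (hg2Lip : ∀ ε : ℝ, ∀ x₀ x₁, ‖πI (g2 ε x₁ - g2 ε x₀)‖ ≤ L2 * ‖x₁ - x₀‖ + e2 ε)
    -- `f₀¹` is Lipschitz with constant `Lf`
    (hf1Lip : ∀ x₀ x₁, ‖f1 0 x₁ - f1 0 x₀‖ ≤ Lf * ‖x₁ - x₀‖)
    -- the unperturbed map `f₀²` preserves the energy coordinate `π_I`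
    (hIpres : ∀ y, πI (f2 0 y) = πI y) :
    ∀ x₀ x₁, ‖πI (g 0 x₁ - g 0 x₀)‖ ≤ (L2 * Lf + L1) * ‖x₁ - x₀‖ := by
  intro x₀ x₁
  rcases subsingleton_or_nontrivial E with hE | hE
  · have hx : x₁ = x₀ := Subsingleton.elim _ _
    subst hx
    simp
  · obtain ⟨y, hy⟩ := exists_ne (0 : E)
    have hy' : 0 < ‖y - (0:E)‖ := by simpa using norm_pos_iff.mpr hy
    -- nonnegativity of L1, L2
    have key : ∀ (L : ℝ) (gg : ℝ → E → E) (e : ℝ → ℝ),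
        Tendsto e (𝓝[≠] (0:ℝ)) (𝓝 0) →
        (∀ x, Tendsto (fun ε => gg ε x) (𝓝[≠] (0:ℝ)) (𝓝 (gg 0 x))) →
        (∀ ε a b, ‖πI (gg ε b - gg ε a)‖ ≤ L * ‖b - a‖ + e ε) →
        0 ≤ L := by
      intro L gg e he hlim hLip
      have h1 : Tendsto (fun ε => ‖πI (gg ε y - gg ε 0)‖) (𝓝[≠] (0:ℝ))
          (𝓝 ‖πI (gg 0 y - gg 0 0)‖) :=
        ((πI.continuous.tendsto _).comp ((hlim y).sub (hlim 0))).norm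
      have h2 : Tendsto (fun ε => L * ‖y - (0:E)‖ + e ε) (𝓝[≠] (0:ℝ))
          (𝓝 (L * ‖y - (0:E)‖ + 0)) := tendsto_const_nhds.add he
      have h3 := le_of_tendsto_of_tendsto' h1 h2 (fun ε => hLip ε 0 y)
      have h4 := norm_nonneg (πI (gg 0 y - gg 0 0))
      nlinarith
    have hL1 : 0 ≤ L1 := key L1 g1 e1 he1 hg1lim hg1Lip
    have hL2 : 0 ≤ L2 := key L2 g2 e2 he2 hg2lim hg2Lip
    -- the telescoping identity
    have hid : ∀ ε : ℝ, ε ≠ 0 → ∀ x,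
        πI (g ε x) = πI (g2 ε (f1 ε x)) + πI (g1 ε x) := by
      intro ε hε x
      rw [hg ε hε, hg2 ε hε, hg1 ε hε]
      simp only [hcomp, map_smul, map_sub, hIpres, smul_eq_mul]
      ring
    -- the bound for ε ≠ 0
    have hbound : ∀ ε : ℝ, ε ≠ 0 →
        ‖πI (g ε x₁ - g ε x₀)‖ ≤
          L2 * (Lf * ‖x₁ - x₀‖ + |ε| * ‖g1 ε x₁ - g1 ε x₀‖) + e2 ε
            + (L1 * ‖x₁ - x₀‖ + e1 ε) := by
      intro ε hε
      have h1 : πI (g ε x₁ - g ε x₀)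
          = πI (g2 ε (f1 ε x₁) - g2 ε (f1 ε x₀)) + πI (g1 ε x₁ - g1 ε x₀) := by
        simp only [map_sub, hid ε hε]; ring
      have h3 : ‖f1 ε x₁ - f1 ε x₀‖ ≤ Lf * ‖x₁ - x₀‖ + |ε| * ‖g1 ε x₁ - g1 ε x₀‖ := by
        have hf : f1 ε x₁ - f1 ε x₀
            = (f1 0 x₁ - f1 0 x₀) + ε • (g1 ε x₁ - g1 ε x₀) := by
          rw [hg1 ε hε, hg1 ε hε, smul_sub ε, smul_smul, smul_smul,
            mul_inv_cancel₀ hε, one_smul, one_smul]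
          abel
        rw [hf]
        calc ‖(f1 0 x₁ - f1 0 x₀) + ε • (g1 ε x₁ - g1 ε x₀)‖
            ≤ ‖f1 0 x₁ - f1 0 x₀‖ + ‖ε • (g1 ε x₁ - g1 ε x₀)‖ := norm_add_le _ _
          _ ≤ Lf * ‖x₁ - x₀‖ + |ε| * ‖g1 ε x₁ - g1 ε x₀‖ := by
              rw [norm_smul, Real.norm_eq_abs]
              exact add_le_add_left (hf1Lip _ _) _
      have h2 := hg2Lip ε (f1 ε x₀) (f1 ε x₁)
      calc ‖πI (g ε x₁ - g ε x₀)‖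
          = ‖πI (g2 ε (f1 ε x₁) - g2 ε (f1 ε x₀)) + πI (g1 ε x₁ - g1 ε x₀)‖ := by rw [h1]
        _ ≤ ‖πI (g2 ε (f1 ε x₁) - g2 ε (f1 ε x₀))‖ + ‖πI (g1 ε x₁ - g1 ε x₀)‖ :=
            norm_add_le _ _
        _ ≤ (L2 * ‖f1 ε x₁ - f1 ε x₀‖ + e2 ε) + (L1 * ‖x₁ - x₀‖ + e1 ε) :=
            add_le_add h2 (hg1Lip ε x₀ x₁)
        _ ≤ _ := by nlinarith [mul_le_mul_of_nonneg_left h3 hL2]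
    -- pass to the limit ε → 0
    have hLHS : Tendsto (fun ε => ‖πI (g ε x₁ - g ε x₀)‖) (𝓝[≠] (0:ℝ))
        (𝓝 ‖πI (g 0 x₁ - g 0 x₀)‖) :=
      ((πI.continuous.tendsto _).comp ((hglim x₁).sub (hglim x₀))).norm
    have habs : Tendsto (fun ε : ℝ => |ε| * ‖g1 ε x₁ - g1 ε x₀‖) (𝓝[≠] (0:ℝ))
        (𝓝 0) := by
      have h5 : Tendsto (fun ε : ℝ => |ε|) (𝓝[≠] (0:ℝ)) (𝓝 0) := by
        have := (continuous_abs.tendsto (0:ℝ)).mono_left (nhdsWithin_le_nhds (s := {(0:ℝ)}ᶜ))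
        simpa using this
      have h6 : Tendsto (fun ε => ‖g1 ε x₁ - g1 ε x₀‖) (𝓝[≠] (0:ℝ))
          (𝓝 ‖g1 0 x₁ - g1 0 x₀‖) := ((hg1lim x₁).sub (hg1lim x₀)).norm
      simpa using h5.mul h6
    have hRHS : Tendsto (fun ε => L2 * (Lf * ‖x₁ - x₀‖ + |ε| * ‖g1 ε x₁ - g1 ε x₀‖) + e2 ε
          + (L1 * ‖x₁ - x₀‖ + e1 ε)) (𝓝[≠] (0:ℝ))
        (𝓝 (L2 * (Lf * ‖x₁ - x₀‖ + 0) + 0 + (L1 * ‖x₁ - x₀‖ + 0))) := by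
      exact ((tendsto_const_nhds.mul (tendsto_const_nhds.add habs)).add he2).add
        (tendsto_const_nhds.add he1)
    have hev : ∀ᶠ ε in 𝓝[≠] (0:ℝ), ‖πI (g ε x₁ - g ε x₀)‖ ≤
        L2 * (Lf * ‖x₁ - x₀‖ + |ε| * ‖g1 ε x₁ - g1 ε x₀‖) + e2 ε
          + (L1 * ‖x₁ - x₀‖ + e1 ε) :=
      eventually_mem_nhdsWithin.mono (fun ε hε => hbound ε hε)
    have hfin := le_of_tendsto_of_tendsto hLHS hRHS hev
    calc ‖πI (g 0 x₁ - g 0 x₀)‖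
        ≤ L2 * (Lf * ‖x₁ - x₀‖ + 0) + 0 + (L1 * ‖x₁ - x₀‖ + 0) := hfin
      _ = (L2 * Lf + L1) * ‖x₁ - x₀‖ := by ring
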